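/- arXiv:1602.08002 — 4 statements merged into one kernel-verified Lean document; each statement's English description precedes it below -/
import Mathlib

section
/- Let P be a finite point set with essential dimension K, and let 𝒢 be a minimum-cardinality family of flats of dimension ≥ 1, with dimensions summing to K, covering P. If k ≥ K and Γ is a k-flat spanned by P, then at least k + 1 - K of the flats of 𝒢 are contained in Γ. -/
open scoped Classical

noncomputable def adim {K V : Type*} [Field K] [AddCommGroup V] [Module K V]
    (s : AffineSubspace K V) : ℤ :=
  if s = ⊥ then -1 else (Module.finrank K s.direction : ℤ)

/-- `Q` spans the flat `Γ` of dimension `k`: `Γ` is the affine span of `Q ∩ Γ`. -/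
def Spans {K V : Type*} [Field K] [AddCommGroup V] [Module K V]
    (Q : Set V) (k : ℤ) (Γ : AffineSubspace K V) : Prop :=
  adim Γ = k ∧ affineSpan K (Q ∩ ↑Γ) = Γ

/-- the number of `k`-flats spanned by `Q` (for `k = -1` this counts the empty flat). -/
noncomputable def nFlats (K : Type*) {V : Type*} [Field K] [AddCommGroup V] [Module K V]
    (Q : Set V) (k : ℤ) : ℕ :=
  Nat.card {Γ : AffineSubspace K V // Spans Q k Γ}

/-- the essential dimension of `Q` is at most `t`. -/
def EssDimLE (K : Type*) {V : Type*} [Field K] [AddCommGroup V] [Module K V]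
    (Q : Set V) (t : ℤ) : Prop :=
  ∃ G : Finset (AffineSubspace K V), (∀ Γ ∈ G, 1 ≤ adim Γ) ∧
    (∀ q ∈ Q, ∃ Γ ∈ G, q ∈ Γ) ∧ ∑ Γ ∈ G, adim Γ ≤ t

/-- `g_m(P)`: the maximum size of a subset of `P` of essential dimension at most `m`. -/
noncomputable def gdim (K : Type*) {V : Type*} [Field K] [AddCommGroup V] [Module K V]
    (P : Finset V) (m : ℤ) : ℕ :=
  sSup {c : ℕ | ∃ P' ⊆ P, EssDimLE K (P' : Set V) m ∧ P'.card = c}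

section AuxLemmas

variable {K V : Type*} [Field K] [AddCommGroup V] [Module K V] [FiniteDimensional K V]

lemma adim_neg_one_le (s : AffineSubspace K V) : -1 ≤ adim s := by
  unfold adim; split <;> omega

lemma adim_mono {s t : AffineSubspace K V} (h : s ≤ t) : adim s ≤ adim t := by
  unfold adim
  by_cases hs : s = ⊥
  · simp only [hs, if_true]; split <;> omega
  · have ht : t ≠ ⊥ := fun hb => hs (le_bot_iff.mp (hb ▸ h))
    simp only [hs, ht, if_false]
    exact_mod_cast Submodule.finrank_mono (AffineSubspace.direction_le h)

lemma adim_strict_mono {s t : AffineSubspace K V} (h : s < t) : adim s < adim t := by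
  have ht : t ≠ ⊥ := fun hb => absurd (hb ▸ h) (not_lt_bot)
  unfold adim
  by_cases hs : s = ⊥
  · simp only [hs, ht, if_true, if_false]; omega
  · simp only [hs, ht, if_false]
    have hd : s.direction < t.direction := by
      rcases lt_iff_le_and_ne.mp h with ⟨hle, hne⟩
      refine lt_iff_le_and_ne.mpr ⟨AffineSubspace.direction_le hle, fun he => hne ?_⟩
      obtain ⟨p, hp⟩ := ((AffineSubspace.nonempty_iff_ne_bot s).mpr hs)
      exact AffineSubspace.ext_of_direction_eq he ⟨p, hp, hle hp⟩
    exact_mod_cast Submodule.finrank_lt_finrank_of_lt hd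

lemma adim_sup_le (s t : AffineSubspace K V) : adim (s ⊔ t) ≤ adim s + adim t + 1 := by
  by_cases hs : s = ⊥
  · rw [hs, bot_sup_eq]; have := adim_neg_one_le t; simp only [adim, hs, if_true]; omega
  by_cases ht : t = ⊥
  · rw [ht, sup_bot_eq]; have := adim_neg_one_le s; simp only [adim, ht, if_true]; omega
  obtain ⟨p, hp⟩ := ((AffineSubspace.nonempty_iff_ne_bot s).mpr hs)
  obtain ⟨q, hq⟩ := ((AffineSubspace.nonempty_iff_ne_bot t).mpr ht)
  have hst : s ⊔ t ≠ ⊥ := fun hb => hs (le_bot_iff.mp (hb ▸ le_sup_left))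
  simp only [adim, hs, ht, hst, if_false]
  have := AffineSubspace.direction_sup hp hq
  rw [this]
  push_cast
  have h1 := Submodule.finrank_add_le_finrank_add_finrank (s.direction ⊔ t.direction) (K ∙ (q -ᵥ p))
  have h2 := Submodule.finrank_add_le_finrank_add_finrank s.direction t.direction
  have h3 : Module.finrank K ↥(K ∙ (q -ᵥ p)) ≤ 1 := by
    rcases eq_or_ne (q -ᵥ p) 0 with h | h
    · rw [h, Submodule.span_zero_singleton]; simp
    · rw [finrank_span_singleton h]
  omega

lemma adim_finset_sup_le {ι : Type*} {G : Finset ι} (hG : G.Nonempty)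
    (f : ι → AffineSubspace K V) :
    adim (G.sup f) ≤ ∑ Λ ∈ G, adim (f Λ) + (G.card - 1) := by
  induction hG using Finset.Nonempty.cons_induction with
  | singleton a => simp
  | cons a s ha hs ih =>
    rw [Finset.sup_cons, Finset.sum_cons, Finset.card_cons]
    have h1 := adim_sup_le (f a) (s.sup f)
    push_cast
    omega


end AuxLemmas

/-- If `G` is a minimum-cardinality family of flats of dimension ≥ 1, with dimensions summing
to the essential dimension `Kd` of `P`, covering `P`, and if `k ≥ Kd` and `Γ` is a
`k`-flat spanned by `P`, then at least `k + 1 - Kd` flats of `G` are contained in `Γ`. -/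
theorem stmt_7 {K V : Type*} [Field K] [AddCommGroup V] [Module K V] [FiniteDimensional K V]
    (P : Finset V) (Kd : ℤ)
    (hKmin : ¬ EssDimLE K (P : Set V) (Kd - 1))
    (G : Finset (AffineSubspace K V))
    (hG1 : ∀ Γ ∈ G, 1 ≤ adim Γ)
    (hGsum : ∑ Γ ∈ G, adim Γ = Kd)
    (hGcov : ∀ p ∈ P, ∃ Γ ∈ G, p ∈ Γ)
    (hGmin : ∀ G' : Finset (AffineSubspace K V), (∀ Γ ∈ G', 1 ≤ adim Γ) →
      ∑ Γ ∈ G', adim Γ = Kd → (∀ p ∈ P, ∃ Γ ∈ G', p ∈ Γ) → G.card ≤ G'.card)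
    (k : ℤ) (hk : Kd ≤ k)
    (Γ : AffineSubspace K V) (hΓ : Spans (P : Set V) k Γ) :
    k + 1 - Kd ≤ ((G.filter (fun Λ => Λ ≤ Γ)).card : ℤ) := by
  classical
  obtain ⟨hΓdim, hΓspan⟩ := hΓ
  rcases Finset.eq_empty_or_nonempty G with h | hGne
  · exfalso
    have hPe : ((P : Set V) ∩ ↑Γ : Set V) = ∅ := by
      ext p
      simp only [Set.mem_inter_iff, Set.mem_empty_iff_false, iff_false]
      rintro ⟨hpP, -⟩
      obtain ⟨Λ, hΛ, -⟩ := hGcov p hpP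
      simp [h] at hΛ
    have hbot : Γ = ⊥ := by rw [← hΓspan, hPe]; exact AffineSubspace.span_empty K V V
    rw [h, Finset.sum_empty] at hGsum
    rw [hbot] at hΓdim
    have : adim (⊥ : AffineSubspace K V) = -1 := if_pos rfl
    omega
  have hsub : Γ ≤ G.sup (fun Λ => Λ ⊓ Γ) := by
    conv_lhs => rw [← hΓspan]
    refine affineSpan_le.mpr ?_
    rintro p ⟨hpP, hpΓ⟩
    obtain ⟨Λ, hΛG, hpΛ⟩ := hGcov p hpP
    exact (Finset.le_sup (f := fun Λ => Λ ⊓ Γ) hΛG) ⟨hpΛ, hpΓ⟩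
  have h1 : k ≤ ∑ Λ ∈ G, adim (Λ ⊓ Γ) + (G.card - 1) :=
    hΓdim ▸ (adim_mono hsub).trans (adim_finset_sup_le hGne _)
  have hsplit := Finset.sum_filter_add_sum_filter_not G (fun Λ => Λ ≤ Γ)
    (fun Λ => adim (Λ ⊓ Γ))
  have hsplit2 := Finset.sum_filter_add_sum_filter_not G (fun Λ => Λ ≤ Γ)
    (fun Λ => adim Λ)
  have hcard := Finset.card_filter_add_card_filter_not
    (s := G) (p := fun Λ => Λ ≤ Γ)
  have hA : ∑ Λ ∈ G.filter (fun Λ => Λ ≤ Γ), adim (Λ ⊓ Γ)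
      = ∑ Λ ∈ G.filter (fun Λ => Λ ≤ Γ), adim Λ :=
    Finset.sum_congr rfl fun Λ hΛ => by
      rw [inf_eq_left.mpr (Finset.mem_filter.mp hΛ).2]
  have hB : ∑ Λ ∈ G.filter (fun Λ => ¬ Λ ≤ Γ), adim (Λ ⊓ Γ)
      ≤ ∑ Λ ∈ G.filter (fun Λ => ¬ Λ ≤ Γ), (adim Λ - 1) := by
    refine Finset.sum_le_sum fun Λ hΛ => ?_
    have hnle := (Finset.mem_filter.mp hΛ).2
    have hlt : Λ ⊓ Γ < Λ :=
      lt_of_le_of_ne inf_le_left (fun he => hnle (by rw [← he]; exact inf_le_right))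
    have := adim_strict_mono hlt
    omega
  rw [Finset.sum_sub_distrib, Finset.sum_const, nsmul_eq_mul, mul_one] at hB
  omega
end

section
/- Let D ⊂ ℝ^d be the vertex set of the d-dimensional cross-polytope, i.e., D = {±e_1, …, ±e_d} where e_i are the standard basis vectors. Then for every i ≥ 1, every affine i-flat contains at most 2i points of D. -/
open scoped Classical

lemma li_aux {d : ℕ} {ι : Type*} [Fintype ι] (κ : ι → Fin d) (ε : ι → ℝ)
    (hε : ∀ b, ε b ≠ 0) (v : ι → Fin d → ℝ)
    (h : ∀ a b, v b (κ a) = if a = b then ε b else 0) :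
    LinearIndependent ℝ v := by
  classical
  have h1 : LinearIndependent ℝ (fun b : ι => (Pi.single b (ε b) : ι → ℝ)) := by
    rw [Fintype.linearIndependent_iff]
    intro g hg a
    have := congrFun hg a
    simp only [Finset.sum_apply, Pi.smul_apply, Pi.single_apply, smul_eq_mul,
      mul_ite, mul_zero, Finset.sum_ite_eq, Finset.mem_univ, if_true, Pi.zero_apply] at this
    exact (mul_eq_zero.1 this).resolve_right (hε a)
  have h2 : (LinearMap.funLeft ℝ ℝ κ) ∘ v = fun b => Pi.single b (ε b) := by
    funext b
    funext a
    simp only [Function.comp_apply, LinearMap.funLeft_apply, h a b, Pi.single_apply]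
  exact LinearIndependent.of_comp (LinearMap.funLeft ℝ ℝ κ) (h2 ▸ h1)

lemma card_le_aux {d : ℕ} {ι : Type*} [Fintype ι] (Γ : AffineSubspace ℝ (Fin d → ℝ))
    (v : ι → Fin d → ℝ) (hv : ∀ a, v a ∈ Γ.direction) (hli : LinearIndependent ℝ v) :
    Fintype.card ι ≤ Module.finrank ℝ Γ.direction := by
  have hli' : LinearIndependent ℝ (fun a : ι => (⟨v a, hv a⟩ : Γ.direction)) := by
    apply LinearIndependent.of_comp Γ.direction.subtype
    exact hli
  exact hli'.fintype_card_le_finrank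

/-- Every affine `i`-flat, `i ≥ 1`, contains at most `2i` vertices of the `d`-dimensional
cross-polytope `D = {±e_1, …, ±e_d} ⊂ ℝ^d`. -/
theorem stmt_12 (d : ℕ) (i : ℕ) (hi : 1 ≤ i) (Γ : AffineSubspace ℝ (Fin d → ℝ))
    (hΓ : adim Γ = (i : ℤ)) :
    ({v : Fin d → ℝ | ∃ l, v = Pi.single l (1 : ℝ) ∨ v = -Pi.single l (1 : ℝ)} ∩
      (Γ : Set (Fin d → ℝ))).ncard ≤ 2 * i := by
  classical
  have hΓne : Γ ≠ ⊥ := by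
    intro h
    rw [adim, if_pos h] at hΓ
    omega
  have hfr : Module.finrank ℝ Γ.direction = i := by
    rw [adim, if_neg hΓne] at hΓ
    exact_mod_cast hΓ
  set A : Finset (Fin d) := Finset.univ.filter (fun l => Pi.single l (1:ℝ) ∈ Γ) with hA
  set B : Finset (Fin d) := Finset.univ.filter (fun l => -Pi.single l (1:ℝ) ∈ Γ) with hB
  have hS : ({v : Fin d → ℝ | ∃ l, v = Pi.single l (1 : ℝ) ∨ v = -Pi.single l (1 : ℝ)} ∩
      (Γ : Set (Fin d → ℝ))) =
      ((A.image (fun l => Pi.single l (1:ℝ)) ∪ B.image (fun l => -Pi.single l (1:ℝ)) :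
        Finset (Fin d → ℝ)) : Set (Fin d → ℝ)) := by
    ext v
    simp only [Set.mem_inter_iff, Set.mem_setOf_eq, Finset.coe_union, Set.mem_union,
      Finset.coe_image, Set.mem_image, Finset.mem_coe, hA, hB, Finset.mem_filter,
      Finset.mem_univ, true_and, SetLike.mem_coe]
    constructor
    · rintro ⟨⟨l, rfl | rfl⟩, hv⟩
      · exact Or.inl ⟨l, hv, rfl⟩
      · exact Or.inr ⟨l, hv, rfl⟩
    · rintro (⟨l, hl, rfl⟩ | ⟨l, hl, rfl⟩)
      · exact ⟨⟨l, Or.inl rfl⟩, hl⟩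
      · exact ⟨⟨l, Or.inr rfl⟩, hl⟩
  rw [hS, Set.ncard_coe_finset]
  have hcard : (A.image (fun l => Pi.single l (1:ℝ)) ∪
      B.image (fun l => -Pi.single l (1:ℝ))).card ≤ A.card + B.card :=
    le_trans (Finset.card_union_le _ _) (add_le_add Finset.card_image_le Finset.card_image_le)
  refine le_trans hcard ?_
  by_cases hAB : ∃ l0, l0 ∈ A ∧ l0 ∈ B
  · obtain ⟨l0, hl0A, hl0B⟩ := hAB
    have h1 : Pi.single l0 (1:ℝ) ∈ Γ := (Finset.mem_filter.1 hl0A).2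
    have h2 : -Pi.single l0 (1:ℝ) ∈ Γ := (Finset.mem_filter.1 hl0B).2
    have h0 : (0 : Fin d → ℝ) ∈ Γ := by
      have hmem := AffineSubspace.smul_vsub_vadd_mem Γ (1/2 : ℝ) h1 h2 h2
      have heq : (1/2 : ℝ) • ((Pi.single l0 (1:ℝ) : Fin d → ℝ) - (-Pi.single l0 (1:ℝ))) +
          (-Pi.single l0 (1:ℝ)) = (0 : Fin d → ℝ) := by
        simp only [sub_neg_eq_add, ← two_smul ℝ, smul_smul]
        norm_num
      simp only [vsub_eq_sub, vadd_eq_add] at hmem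
      rwa [heq] at hmem
    have hmem : ∀ l ∈ A ∪ B, Pi.single l (1:ℝ) ∈ Γ.direction := by
      intro l hl
      rcases Finset.mem_union.1 hl with h | h
      · have := AffineSubspace.vsub_mem_direction ((Finset.mem_filter.1 h).2) h0
        simpa [vsub_eq_sub] using this
      · have := AffineSubspace.vsub_mem_direction ((Finset.mem_filter.1 h).2) h0
        rw [vsub_eq_sub, sub_zero] at this
        simpa using Γ.direction.neg_mem this
    have hli : LinearIndependent ℝ (fun a : ↥(A ∪ B) => (Pi.single (a : Fin d) (1:ℝ) : Fin d → ℝ)) := by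
      apply li_aux (fun a : ↥(A ∪ B) => (a : Fin d)) (fun _ => 1) (fun _ => one_ne_zero)
      intro a b
      rw [Pi.single_apply]
      by_cases hab : a = b
      · rw [if_pos (congrArg Subtype.val hab), if_pos hab]
      · rw [if_neg (fun h => hab (Subtype.ext h)), if_neg hab]
    have hcard1 : (A ∪ B).card ≤ i := by
      have := card_le_aux Γ _ (fun a : ↥(A ∪ B) => hmem a a.2) hli
      rwa [Fintype.card_coe, hfr] at this
    have h3 : A.card ≤ (A ∪ B).card := Finset.card_le_card Finset.subset_union_left
    have h4 : B.card ≤ (A ∪ B).card := Finset.card_le_card Finset.subset_union_right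
    omega
  · push_neg at hAB
    have hdisj : Disjoint A B := Finset.disjoint_left.2 (fun {l} hlA hlB => hAB l hlA hlB)
    have hsum : A.card + B.card = (A ∪ B).card :=
      (Finset.card_union_of_disjoint hdisj).symm
    rw [hsum]
    rcases Finset.eq_empty_or_nonempty (A ∪ B) with h | ⟨l0, hl0⟩
    · simp [h]
    · set w : Fin d → (Fin d → ℝ) :=
        fun l => if l ∈ A then Pi.single l (1:ℝ) else -Pi.single l (1:ℝ) with hw
      have hwΓ : ∀ l ∈ A ∪ B, w l ∈ Γ := by
        intro l hl
        by_cases h : l ∈ A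
        · simpa [hw, h] using (Finset.mem_filter.1 h).2
        · have hB' : l ∈ B := (Finset.mem_union.1 hl).resolve_left h
          simpa [hw, h] using (Finset.mem_filter.1 hB').2
      have hli : LinearIndependent ℝ
          (fun a : ↥((A ∪ B).erase l0) => w (a : Fin d) - w l0) := by
        apply li_aux (fun a : ↥((A ∪ B).erase l0) => (a : Fin d))
          (fun a => if (a : Fin d) ∈ A then (1:ℝ) else -1)
          (fun a => by split <;> norm_num)
        intro a b
        have hane : (a : Fin d) ≠ l0 := (Finset.mem_erase.1 a.2).1
        have h1 : w l0 (a : Fin d) = 0 := by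
          by_cases hc : l0 ∈ A <;> simp [hw, hc, Pi.single_apply, hane]
        have h2 : w (b : Fin d) (a : Fin d) =
            if a = b then (if (b : Fin d) ∈ A then (1:ℝ) else -1) else 0 := by
          by_cases hab : a = b
          · subst hab
            by_cases hc : (a : Fin d) ∈ A <;> simp [hw, hc, Pi.single_apply]
          · have hne : (a : Fin d) ≠ (b : Fin d) := fun h => hab (Subtype.ext h)
            by_cases hc : (b : Fin d) ∈ A <;> simp [hw, hc, hab, Pi.single_apply, hne]
        simp [Pi.sub_apply, h1, h2]
      have hcard2 : ((A ∪ B).erase l0).card ≤ i := by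
        have := card_le_aux Γ _
          (fun a : ↥((A ∪ B).erase l0) =>
            AffineSubspace.vsub_mem_direction (hwΓ _ (Finset.mem_of_mem_erase a.2))
              (hwΓ _ hl0)) hli
        rwa [Fintype.card_coe, hfr] at this
      have herase : ((A ∪ B).erase l0).card = (A ∪ B).card - 1 :=
        Finset.card_erase_of_mem hl0
      have hpos : 0 < (A ∪ B).card := Finset.card_pos.2 ⟨l0, hl0⟩
      omega
end

section
/- (de Bruijn–Erdős) Let P be a set of n points in a projective space, not all collinear. Then P spans at least n distinct lines. -/
open scoped Classical

section Aux

variable {K V : Type*} [Field K] [AddCommGroup V] [Module K V]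

theorem finrank_direction_affineSpan_pair {q r : V} (h : q ≠ r) :
    Module.finrank K (line[K, q, r] : AffineSubspace K V).direction = 1 := by
  rw [direction_affineSpan, vectorSpan_pair, finrank_span_singleton (vsub_ne_zero.2 h)]

theorem adim_affineSpan_pair {q r : V} (h : q ≠ r) :
    adim (line[K, q, r] : AffineSubspace K V) = 1 := by
  have hb : (line[K, q, r] : AffineSubspace K V) ≠ ⊥ :=
    (AffineSubspace.nonempty_iff_ne_bot _).1 ⟨q, left_mem_affineSpan_pair K q r⟩
  rw [adim, if_neg hb, finrank_direction_affineSpan_pair h, Nat.cast_one]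

theorem adim_one_finrank {Γ : AffineSubspace K V} (h : adim Γ = 1) :
    Module.finrank K Γ.direction = 1 := by
  rw [adim] at h
  split_ifs at h with hb
  exact_mod_cast h

theorem adim_one_ne_bot {Γ : AffineSubspace K V} (h : adim Γ = 1) : Γ ≠ ⊥ := by
  intro hb; rw [adim, if_pos hb] at h; omega

theorem eq_of_le_of_finrank_eq' [FiniteDimensional K V] {Γ₁ Γ₂ : AffineSubspace K V}
    (hle : Γ₁ ≤ Γ₂) (hne : (Γ₁ : Set V).Nonempty)
    (h : Module.finrank K Γ₁.direction = Module.finrank K Γ₂.direction) : Γ₁ = Γ₂ := by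
  obtain ⟨p, hp⟩ := hne
  exact AffineSubspace.ext_of_direction_eq
    (Submodule.eq_of_le_of_finrank_eq (AffineSubspace.direction_le hle) h)
    ⟨p, hp, hle hp⟩

theorem spans_pair (P : Finset V) {q r : V} (hq : q ∈ P) (hr : r ∈ P) (h : q ≠ r) :
    Spans ((P : Set V)) (1 : ℤ) (line[K, q, r]) := by
  refine ⟨adim_affineSpan_pair h, le_antisymm (affineSpan_le.2 Set.inter_subset_right) ?_⟩
  apply affineSpan_mono
  intro x hx
  rcases Set.mem_insert_iff.1 hx with h1 | h1
  · subst h1; exact ⟨hq, left_mem_affineSpan_pair K _ _⟩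
  · rw [Set.mem_singleton_iff] at h1; subst h1
    exact ⟨hr, right_mem_affineSpan_pair K _ _⟩

theorem line_eq_pair [FiniteDimensional K V] {Γ : AffineSubspace K V} (h : adim Γ = 1)
    {q r : V} (hq : q ∈ Γ) (hr : r ∈ Γ) (hqr : q ≠ r) : Γ = line[K, q, r] := by
  refine (eq_of_le_of_finrank_eq' ?_ ⟨q, left_mem_affineSpan_pair K q r⟩ ?_).symm
  · refine affineSpan_le.2 ?_
    intro x hx
    rcases Set.mem_insert_iff.1 hx with h1 | h1
    · subst h1; exact hq
    · rw [Set.mem_singleton_iff] at h1; subst h1; exact hr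
  · rw [finrank_direction_affineSpan_pair hqr, adim_one_finrank h]

theorem collinear_of_subset_line {Γ : AffineSubspace K V} (h : adim Γ = 1)
    {s : Set V} (hs : s ⊆ (Γ : Set V)) : Collinear K s := by
  rw [collinear_iff_rank_le_one]
  refine (Submodule.rank_mono (vectorSpan_mono K hs)).trans ?_
  have hf : Module.finrank K ((Γ : Set V) |> vectorSpan K) = 1 := by
    rw [← direction_affineSpan, Γ.affineSpan_coe]; exact adim_one_finrank h
  haveI : FiniteDimensional K (vectorSpan K (Γ : Set V)) :=
    Module.finite_of_finrank_eq_succ hf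
  rw [← Module.finrank_eq_rank, hf, Nat.cast_one]

theorem exists_triple {s : Set V} (h : ¬ Collinear K s) :
    ∃ a ∈ s, ∃ b ∈ s, ∃ c ∈ s, a ≠ b ∧ c ∉ line[K, a, b] := by
  by_contra hc
  push_neg at hc
  apply h
  rcases Set.eq_empty_or_nonempty s with rfl | ⟨a, ha⟩
  · exact collinear_empty K V
  by_cases hab : ∃ b ∈ s, a ≠ b
  · obtain ⟨b, hb, hne⟩ := hab
    have : s ⊆ (line[K, a, b] : Set V) := fun c hcs => hc a ha b hb c hcs hne
    exact collinear_of_subset_line (adim_affineSpan_pair hne) this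
  · push_neg at hab
    have : s ⊆ {a} := fun x hx => (hab x hx).symm
    exact (collinear_singleton K a).subset this

end Aux

/-- de Bruijn–Erdős: a set of `n` points, not all collinear, spans at least `n` lines. -/
theorem stmt_15 {K V : Type*} [Field K] [AddCommGroup V] [Module K V] [FiniteDimensional K V]
    (P : Finset V) (h3 : 3 ≤ P.card) (hcol : ¬ Collinear K (P : Set V)) :
    P.card ≤ nFlats K (P : Set V) 1 := by
  classical
  let LT := {Γ : AffineSubspace K V // Spans (P : Set V) 1 Γ}
  letI : Membership {x // x ∈ P} LT := ⟨fun l p => (p : V) ∈ l.1⟩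
  have mem_def : ∀ (p : {x // x ∈ P}) (l : LT), p ∈ l ↔ (p : V) ∈ l.1 := fun _ _ => Iff.rfl
  haveI : Finite LT := by
    apply Finite.of_injective (fun Γ : LT =>
      (⟨P.filter (fun x => x ∈ Γ.1), Finset.mem_powerset.2 (Finset.filter_subset _ _)⟩ :
        ↥P.powerset))
    intro Γ₁ Γ₂ h
    have h2 : P.filter (fun x => x ∈ Γ₁.1) = P.filter (fun x => x ∈ Γ₂.1) :=
      congrArg Subtype.val h
    have h' : (P : Set V) ∩ ↑Γ₁.1 = (P : Set V) ∩ ↑Γ₂.1 := by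
      ext x
      constructor <;> intro hx
      · have : x ∈ P.filter (fun x => x ∈ Γ₂.1) := h2 ▸ Finset.mem_filter.2 ⟨hx.1, hx.2⟩
        exact ⟨hx.1, (Finset.mem_filter.1 this).2⟩
      · have : x ∈ P.filter (fun x => x ∈ Γ₁.1) := h2 ▸ Finset.mem_filter.2 ⟨hx.1, hx.2⟩
        exact ⟨hx.1, (Finset.mem_filter.1 this).2⟩
    exact Subtype.ext (by rw [← Γ₁.2.2, ← Γ₂.2.2, h'])
  obtain ⟨a, ha, b, hb, c, hc, hab, hcl⟩ := exists_triple hcol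
  have hac : a ≠ c := fun h => hcl (h ▸ left_mem_affineSpan_pair K a b)
  have hbc : b ≠ c := fun h => hcl (h ▸ right_mem_affineSpan_pair K a b)
  haveI : Configuration.HasLines {x // x ∈ P} LT :=
    { exists_point := by
        intro l
        by_contra hall
        push_neg at hall
        apply hcol
        apply collinear_of_subset_line l.2.1
        intro x hx
        exact hall ⟨x, hx⟩
      exists_line := by
        intro p
        by_cases hp : (p : V) ∈ line[K, a, b]
        · by_cases hpc : (p : V) = c
          · exact absurd (hpc ▸ hp) hcl
          · by_contra hno
            push_neg at hno
            have h1 : (p : V) ∈ line[K, a, c] :=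
              hno ⟨line[K, a, c], spans_pair P ha hc hac⟩
            have h2 : (p : V) ∈ line[K, b, c] :=
              hno ⟨line[K, b, c], spans_pair P hb hc hbc⟩
            have e1 : line[K, a, c] = line[K, (p : V), c] :=
              line_eq_pair (adim_affineSpan_pair hac) h1
                (right_mem_affineSpan_pair K a c) hpc
            have e2 : line[K, b, c] = line[K, (p : V), c] :=
              line_eq_pair (adim_affineSpan_pair hbc) h2
                (right_mem_affineSpan_pair K b c) hpc
            have e3 : line[K, a, c] = line[K, a, b] := by
              refine line_eq_pair ?_ (left_mem_affineSpan_pair K a c) ?_ hab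
              · exact adim_affineSpan_pair hac
              · rw [e1, ← e2]; exact left_mem_affineSpan_pair K b c
            exact hcl (e3 ▸ right_mem_affineSpan_pair K a c)
        · exact ⟨⟨line[K, a, b], spans_pair P ha hb hab⟩, hp⟩
      eq_or_eq := by
        intro p₁ p₂ l₁ l₂ h₁₁ h₂₁ h₁₂ h₂₂
        by_cases hp : p₁ = p₂
        · exact Or.inl hp
        · have hne : (p₁ : V) ≠ (p₂ : V) := fun h => hp (Subtype.ext h)
          refine Or.inr (Subtype.ext ?_)
          rw [line_eq_pair l₁.2.1 h₁₁ h₂₁ hne, line_eq_pair l₂.2.1 h₁₂ h₂₂ hne]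
      mkLine := fun {p₁ p₂} h =>
        ⟨line[K, (p₁ : V), (p₂ : V)], spans_pair P p₁.2 p₂.2 (fun hc => h (Subtype.ext hc))⟩
      mkLine_ax := fun {p₁ p₂} h =>
        ⟨left_mem_affineSpan_pair K _ _, right_mem_affineSpan_pair K _ _⟩ }
  haveI : Fintype LT := Fintype.ofFinite LT
  have hle := Configuration.HasLines.card_le (P := {x // x ∈ P}) (L := LT)
  have : nFlats K (P : Set V) 1 = Nat.card LT := rfl
  rw [this, Nat.card_eq_fintype_card]
  calc P.card = Fintype.card {x // x ∈ P} := (Fintype.card_coe P).symm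
    _ ≤ Fintype.card LT := hle
end

section
/- Let S ⊂ ℝ^d be a finite point set in the hyperplane x_1 = 0 with f_k(S) < f_{k-1}(S), such that no (k+1)-flat through a generic origin point contains more points of S than some k-flat does, and |S| − g_k(S) = c. Then for sufficiently large m, the set P = S ∪ L (with L a set of m collinear points on a line through the origin perpendicular to the hyperplane, avoiding the origin, with no flat spanned by S incident to the origin) satisfies f_{k+1}(P) < f_k(P) and |P| − g_{k+1}(P) = c. -/
open scoped Classical

set_option linter.unusedSectionVars false
set_option maxHeartbeats 1000000

namespace Stmt17

open Module AffineSubspace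
variable {d : ℕ} [NeZero d]
noncomputable def e₀ : Fin d → ℝ := Pi.single 0 1
lemma e₀_zero : e₀ (d := d) 0 = 1 := Pi.single_eq_same 0 1
lemma e₀_apply_ne {i : Fin d} (hi : i ≠ 0) : e₀ (d := d) i = 0 := Pi.single_eq_of_ne hi 1
lemma e₀_ne_zero : e₀ (d := d) ≠ 0 := by
  intro h; have := congrFun h 0; rw [e₀_zero] at this; simp at this
noncomputable def axisA : AffineSubspace ℝ (Fin d → ℝ) :=
  (Submodule.span ℝ {e₀ (d := d)}).toAffineSubspace
lemma mem_axisA {p : Fin d → ℝ} : p ∈ axisA (d := d) ↔ ∀ i, i ≠ 0 → p i = 0 := by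
  rw [axisA, Submodule.mem_toAffineSubspace, Submodule.mem_span_singleton]
  constructor
  · rintro ⟨a, rfl⟩ i hi; simp [e₀_apply_ne hi]
  · intro h
    refine ⟨p 0, funext fun i => ?_⟩
    by_cases hi : i = 0
    · subst hi; simp [e₀_zero]
    · simp [e₀_apply_ne hi, h i hi]
lemma zero_mem_axisA : (0 : Fin d → ℝ) ∈ axisA (d := d) := by
  rw [mem_axisA]; intro i _; rfl
lemma axisA_ne_bot : axisA (d := d) ≠ ⊥ := by
  intro h; have := zero_mem_axisA (d := d); rw [h] at this; exact this
lemma adim_axisA : adim (axisA (d := d)) = 1 := by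
  rw [adim, if_neg axisA_ne_bot, axisA, Submodule.toAffineSubspace_direction,
    finrank_span_singleton e₀_ne_zero]; rfl
noncomputable def HA : AffineSubspace ℝ (Fin d → ℝ) :=
  (LinearMap.ker (LinearMap.proj (R := ℝ) (φ := fun _ : Fin d => ℝ) 0)).toAffineSubspace
lemma mem_HA {p : Fin d → ℝ} : p ∈ HA (d := d) ↔ p 0 = 0 := by
  rw [HA, Submodule.mem_toAffineSubspace, LinearMap.mem_ker]; rfl
lemma direction_HA_mem {v : Fin d → ℝ} :
    v ∈ (HA (d := d)).direction ↔ v 0 = 0 := by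
  rw [HA, Submodule.toAffineSubspace_direction, LinearMap.mem_ker]; rfl
lemma adim_nonneg_of_ne_bot {Γ : AffineSubspace ℝ (Fin d → ℝ)} (h : Γ ≠ ⊥) :
    0 ≤ adim Γ := by rw [adim, if_neg h]; positivity
lemma adim_eq_finrank {Γ : AffineSubspace ℝ (Fin d → ℝ)} (h : Γ ≠ ⊥) :
    adim Γ = (finrank ℝ Γ.direction : ℤ) := by rw [adim, if_neg h]
lemma finrank_sup_span_singleton {W : Submodule ℝ (Fin d → ℝ)} {v : Fin d → ℝ}
    (hv : v ∉ W) : finrank ℝ ↥(W ⊔ Submodule.span ℝ {v}) = finrank ℝ W + 1 := by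
  have h0 : v ≠ 0 := fun h => hv (h ▸ W.zero_mem)
  have hlt : W < W ⊔ Submodule.span ℝ {v} := by
    refine lt_of_le_of_ne le_sup_left fun h => hv ?_
    have : Submodule.span ℝ {v} ≤ W := by rw [h]; exact le_sup_right
    exact this (Submodule.mem_span_singleton_self v)
  have h1 : finrank ℝ W < finrank ℝ ↥(W ⊔ Submodule.span ℝ {v}) :=
    Submodule.finrank_lt_finrank_of_lt hlt
  have h2 : finrank ℝ ↥(W ⊔ Submodule.span ℝ {v}) ≤ finrank ℝ W + 1 := by
    have := Submodule.finrank_sup_add_finrank_inf_eq W (Submodule.span ℝ {v})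
    have hle : finrank ℝ ↥(W ⊔ Submodule.span ℝ {v}) ≤
        finrank ℝ W + finrank ℝ ↥(Submodule.span ℝ {v}) := by omega
    rwa [finrank_span_singleton h0] at hle
  omega

/-- extending a flat inside the hyperplane by a point off the hyperplane -/
lemma insert_point_lemma {T : AffineSubspace ℝ (Fin d → ℝ)} (hTH : T ≤ HA (d := d))
    (hne : T ≠ ⊥) {l : Fin d → ℝ} (hl : l 0 ≠ 0) :
    adim (affineSpan ℝ (insert l (T : Set (Fin d → ℝ)))) = adim T + 1 ∧
    (∀ x ∈ affineSpan ℝ (insert l (T : Set (Fin d → ℝ))), x 0 = 0 → x ∈ T) := by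
  obtain ⟨q, hq⟩ : ((T : Set (Fin d → ℝ))).Nonempty := by
    rwa [AffineSubspace.nonempty_iff_ne_bot]
  have hq0 : q 0 = 0 := mem_HA.1 (hTH hq)
  have hdir : (affineSpan ℝ (insert l (T : Set (Fin d → ℝ)))).direction
      = Submodule.span ℝ {l -ᵥ q} ⊔ T.direction := direction_affineSpan_insert hq
  have hvW : (l -ᵥ q) ∉ T.direction := by
    intro h
    have h2 : (l -ᵥ q) 0 = 0 := direction_HA_mem.1 (direction_le hTH h)
    rw [vsub_eq_sub] at h2
    have : l 0 - q 0 = 0 := h2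
    rw [hq0, sub_zero] at this
    exact hl this
  constructor
  · have hnb : affineSpan ℝ (insert l (T : Set (Fin d → ℝ))) ≠ ⊥ := by
      rw [← AffineSubspace.nonempty_iff_ne_bot]
      exact ⟨l, subset_affineSpan ℝ _ (Set.mem_insert _ _)⟩
    rw [adim_eq_finrank hnb, adim_eq_finrank hne, hdir, sup_comm,
      finrank_sup_span_singleton hvW]
    push_cast; ring
  · intro x hx hx0
    rw [mem_affineSpan_insert_iff hq] at hx
    obtain ⟨r, p0, hp0, rfl⟩ := hx
    have hp00 : p0 0 = 0 := mem_HA.1 (hTH hp0)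
    have hco : r * (l 0 - q 0) + p0 0 = 0 := by
      have : (r • (l -ᵥ q) +ᵥ p0) 0 = 0 := hx0
      simpa [vsub_eq_sub, vadd_eq_add, mul_comm] using this
    rw [hq0, sub_zero, hp00, add_zero] at hco
    have hr : r = 0 := by
      rcases mul_eq_zero.1 hco with h | h
      · exact h
      · exact absurd h hl
    rw [hr]
    simpa using hp0
/-- the axis is contained in any flat containing `0` and a nonzero axis point -/
lemma axis_le_of_mem {Γ : AffineSubspace ℝ (Fin d → ℝ)} {l : Fin d → ℝ}
    (h0 : (0 : Fin d → ℝ) ∈ Γ) (hlΓ : l ∈ Γ) (hla : l ∈ axisA (d := d))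
    (hl0 : l 0 ≠ 0) : axisA (d := d) ≤ Γ := by
  intro x hx
  show x ∈ Γ
  have hx2 : x ∈ axisA (d := d) := hx
  rw [mem_axisA] at hx2 hla
  have hxe : x = (x 0 / l 0) • (l -ᵥ (0 : Fin d → ℝ)) +ᵥ (0 : Fin d → ℝ) := by
    funext i
    by_cases hi : i = 0
    · subst hi
      simp [vsub_eq_sub, vadd_eq_add, div_mul_cancel₀ _ hl0]
    · simp [vsub_eq_sub, vadd_eq_add, hla i hi, hx2 i hi]
  rw [hxe]
  exact Γ.smul_vsub_vadd_mem _ hlΓ h0 h0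
/-- a flat containing two distinct axis points contains the origin -/
lemma zero_mem_of_two {Γ : AffineSubspace ℝ (Fin d → ℝ)} {l l' : Fin d → ℝ}
    (hl : l ∈ Γ) (hl' : l' ∈ Γ) (ha : l ∈ axisA (d := d)) (ha' : l' ∈ axisA (d := d))
    (hne : l ≠ l') : (0 : Fin d → ℝ) ∈ Γ := by
  rw [mem_axisA] at ha ha'
  have hll' : l 0 ≠ l' 0 := by
    intro h
    apply hne
    funext i
    by_cases hi : i = 0
    · subst hi; exact h
    · rw [ha i hi, ha' i hi]
  have hz : (0 : Fin d → ℝ) = (l 0 / (l 0 - l' 0)) • (l' -ᵥ l) +ᵥ l := by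
    funext i
    by_cases hi : i = 0
    · subst hi
      have hd0 : l 0 - l' 0 ≠ 0 := sub_ne_zero.2 hll'
      simp only [vsub_eq_sub, vadd_eq_add, Pi.add_apply, Pi.smul_apply, Pi.sub_apply,
        smul_eq_mul, Pi.zero_apply]
      field_simp
      ring
    · simp [vsub_eq_sub, vadd_eq_add, ha i hi, ha' i hi]
  rw [hz]
  exact Γ.smul_vsub_vadd_mem _ hl' hl hl
/-- dimension of the join of a hyperplane flat (missing the origin) with the axis -/
lemma sup_axis_adim {T : AffineSubspace ℝ (Fin d → ℝ)} (hTH : T ≤ HA (d := d))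
    (hne : T ≠ ⊥) (h0 : (0 : Fin d → ℝ) ∉ T) :
    adim (T ⊔ axisA (d := d)) = adim T + 2 := by
  obtain ⟨q, hq⟩ : ((T : Set (Fin d → ℝ))).Nonempty := by
    rwa [AffineSubspace.nonempty_iff_ne_bot]
  have hq0 : q 0 = 0 := mem_HA.1 (hTH hq)
  have hdir : (T ⊔ axisA (d := d)).direction
      = T.direction ⊔ (axisA (d := d)).direction ⊔ Submodule.span ℝ {(0 : Fin d → ℝ) -ᵥ q} :=
    direction_sup hq zero_mem_axisA
  have haxd : (axisA (d := d)).direction = Submodule.span ℝ {e₀ (d := d)} :=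
    Submodule.toAffineSubspace_direction _
  have h1 : ((0 : Fin d → ℝ) -ᵥ q) ∉ T.direction := by
    intro h
    exact h0 (by simpa using AffineSubspace.vadd_mem_of_mem_direction h hq)
  have hW' : finrank ℝ ↥(T.direction ⊔ Submodule.span ℝ {(0 : Fin d → ℝ) -ᵥ q})
      = finrank ℝ T.direction + 1 := finrank_sup_span_singleton h1
  have hWH : T.direction ⊔ Submodule.span ℝ {(0 : Fin d → ℝ) -ᵥ q} ≤ (HA (d := d)).direction := by
    refine sup_le (direction_le hTH) ?_
    rw [Submodule.span_le, Set.singleton_subset_iff]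
    rw [SetLike.mem_coe, direction_HA_mem, vsub_eq_sub]
    show (0 : ℝ) - q 0 = 0
    rw [hq0, sub_zero]
  have he₀ : e₀ (d := d) ∉ T.direction ⊔ Submodule.span ℝ {(0 : Fin d → ℝ) -ᵥ q} := by
    intro h
    have := direction_HA_mem.1 (hWH h)
    rw [e₀_zero] at this
    exact one_ne_zero this
  have hnb : T ⊔ axisA (d := d) ≠ ⊥ := by
    rw [← AffineSubspace.nonempty_iff_ne_bot]
    exact ⟨q, (le_sup_left : T ≤ _) hq⟩
  rw [adim_eq_finrank hnb, adim_eq_finrank hne, hdir, haxd]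
  rw [sup_right_comm, finrank_sup_span_singleton he₀, hW']
  push_cast; ring
/-- the flats spanned by a finite set form a finite type. -/
lemma spans_finite {Q : Set (Fin d → ℝ)} (hQ : Q.Finite) (k : ℤ) :
    Finite {Γ : AffineSubspace ℝ (Fin d → ℝ) // Spans Q k Γ} := by
  have : Finite ↥Q := hQ
  refine Finite.of_injective
    (fun Γ => ({q : ↥Q | (q : Fin d → ℝ) ∈ Γ.1} : Set ↥Q)) ?_
  intro Γ Γ' h
  have hQΓ : Q ∩ ↑Γ.1 = Q ∩ ↑Γ'.1 := by
    ext x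
    simp only [Set.mem_inter_iff]
    constructor
    · rintro ⟨hx, hx'⟩
      have h2 : (⟨x, hx⟩ : ↥Q) ∈ {q : ↥Q | (q : Fin d → ℝ) ∈ Γ'.1} := by
        rw [show {q : ↥Q | (q : Fin d → ℝ) ∈ Γ'.1} = _ from h.symm]; exact hx'
      exact ⟨hx, h2⟩
    · rintro ⟨hx, hx'⟩
      have h2 : (⟨x, hx⟩ : ↥Q) ∈ {q : ↥Q | (q : Fin d → ℝ) ∈ Γ.1} := by
        rw [show {q : ↥Q | (q : Fin d → ℝ) ∈ Γ.1} = _ from h]; exact hx'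
      exact ⟨hx, h2⟩
  ext1
  rw [← Γ.2.2, ← Γ'.2.2, hQΓ]


section Main

variable {k : ℤ} {S L : Finset (Fin d → ℝ)}
  (hS : ∀ p ∈ S, p 0 = 0)
  (hO : ∀ Γ : AffineSubspace ℝ (Fin d → ℝ),
      (∃ j : ℤ, 0 ≤ j ∧ Spans ((S : Set (Fin d → ℝ))) j Γ) → (0 : Fin d → ℝ) ∉ Γ)
  (hL : ∀ p ∈ L, ∀ i, i ≠ 0 → p i = 0) (hL0 : (0 : Fin d → ℝ) ∉ L)

include hL hL0 in
lemma L_x0 {l : Fin d → ℝ} (hl : l ∈ L) : l 0 ≠ 0 := by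
  intro h
  apply hL0
  have : l = 0 := by
    funext i
    by_cases hi : i = 0
    · subst hi; exact h
    · exact hL l hl i hi
  rwa [this] at hl

include hL in
lemma L_mem_axis {l : Fin d → ℝ} (hl : l ∈ L) : l ∈ axisA (d := d) :=
  mem_axisA.2 (hL l hl)

include hS in
lemma spansS_le_HA {T : AffineSubspace ℝ (Fin d → ℝ)}
    (h : affineSpan ℝ ((S : Set (Fin d → ℝ)) ∩ ↑T) = T) : T ≤ HA (d := d) := by
  rw [← h]
  refine affineSpan_le.2 fun x hx => ?_
  exact mem_HA.2 (hS x hx.1)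

lemma spans_ne_bot {Q : Set (Fin d → ℝ)} {j : ℤ} {T : AffineSubspace ℝ (Fin d → ℝ)}
    (hj : 0 ≤ j) (h : Spans Q j T) : T ≠ ⊥ := by
  intro hb
  rw [hb] at h
  rw [Spans, adim, if_pos rfl] at h
  omega

/-- The span of `S ∩ Γ` inherits a `Spans` certificate whenever `T := span (S ∩ Γ) ≤ Γ`. -/
lemma spans_of_inter {Γ : AffineSubspace ℝ (Fin d → ℝ)}
    (T : AffineSubspace ℝ (Fin d → ℝ))
    (hT : affineSpan ℝ ((S : Set (Fin d → ℝ)) ∩ ↑Γ) = T) (hTΓ : T ≤ Γ) :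
    affineSpan ℝ ((S : Set (Fin d → ℝ)) ∩ ↑T) = T := by
  have h1 : (S : Set (Fin d → ℝ)) ∩ ↑T = (S : Set (Fin d → ℝ)) ∩ ↑Γ := by
    apply Set.Subset.antisymm
    · exact fun x hx => ⟨hx.1, hTΓ hx.2⟩
    · intro x hx
      exact ⟨hx.1, hT ▸ subset_affineSpan ℝ _ hx⟩
  rw [h1, hT]

include hS hO hL hL0 in
/-- lower bound: `f_k(S ∪ L) ≥ f_{k-1}(S) * |L|` -/
lemma fk_lower (hk : 0 < k) :
    nFlats ℝ ((S : Set (Fin d → ℝ))) (k - 1) * L.card ≤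
      nFlats ℝ ((S : Set (Fin d → ℝ)) ∪ (L : Set (Fin d → ℝ))) k := by
  classical
  have hfin : Finite {Γ : AffineSubspace ℝ (Fin d → ℝ) //
      Spans ((S : Set (Fin d → ℝ)) ∪ (L : Set (Fin d → ℝ))) k Γ} :=
    spans_finite ((S.finite_toSet).union (L.finite_toSet)) k
  have key : ∀ (T : {T : AffineSubspace ℝ (Fin d → ℝ) // Spans (S : Set (Fin d → ℝ)) (k-1) T})
      (l : {l : Fin d → ℝ // l ∈ L}),
      Spans ((S : Set (Fin d → ℝ)) ∪ (L : Set (Fin d → ℝ))) k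
        (affineSpan ℝ (insert l.1 (T.1 : Set (Fin d → ℝ)))) := by
    rintro ⟨T, hTd, hTs⟩ ⟨l, hl⟩
    have hTH : T ≤ HA (d := d) := spansS_le_HA hS hTs
    have hTne : T ≠ ⊥ := spans_ne_bot (by omega) ⟨hTd, hTs⟩
    have hl0 : l 0 ≠ 0 := L_x0 hL hL0 hl
    obtain ⟨had, _⟩ := insert_point_lemma hTH hTne hl0
    constructor
    · rw [had, hTd]; ring
    · apply le_antisymm
      · exact affineSpan_le.2 fun x hx => hx.2
      · have h1 : affineSpan ℝ (insert l ((S : Set (Fin d → ℝ)) ∩ ↑T)) =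
            affineSpan ℝ (insert l (T : Set (Fin d → ℝ))) := by
          conv_rhs => rw [← hTs]
          rw [affineSpan_insert_affineSpan]
        rw [← h1]
        apply affineSpan_le.2
        intro x hx
        rcases hx with rfl | hx
        · exact subset_affineSpan ℝ _ ⟨Or.inr (by exact_mod_cast hl),
            subset_affineSpan ℝ _ (Set.mem_insert _ _)⟩
        · exact subset_affineSpan ℝ _ ⟨Or.inl hx.1,
            subset_affineSpan ℝ _ (Set.mem_insert_of_mem _ hx)⟩
  let φ : {T : AffineSubspace ℝ (Fin d → ℝ) // Spans (S : Set (Fin d → ℝ)) (k-1) T} ×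
      {l : Fin d → ℝ // l ∈ L} →
      {Γ : AffineSubspace ℝ (Fin d → ℝ) //
        Spans ((S : Set (Fin d → ℝ)) ∪ (L : Set (Fin d → ℝ))) k Γ} :=
    fun x => ⟨affineSpan ℝ (insert x.2.1 (x.1.1 : Set (Fin d → ℝ))), key x.1 x.2⟩
  have hinj : Function.Injective φ := by
    rintro ⟨⟨T, hTd, hTs⟩, ⟨l, hl⟩⟩ ⟨⟨T', hTd', hTs'⟩, ⟨l', hl'⟩⟩ h
    simp only [φ, Subtype.mk.injEq] at h
    have hTH : T ≤ HA (d := d) := spansS_le_HA hS hTs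
    have hTne : T ≠ ⊥ := spans_ne_bot (by omega) ⟨hTd, hTs⟩
    have hTH' : T' ≤ HA (d := d) := spansS_le_HA hS hTs'
    have hTne' : T' ≠ ⊥ := spans_ne_bot (by omega) ⟨hTd', hTs'⟩
    have hl0 : l 0 ≠ 0 := L_x0 hL hL0 hl
    have hl0' : l' 0 ≠ 0 := L_x0 hL hL0 hl'
    obtain ⟨_, hmem⟩ := insert_point_lemma hTH hTne hl0
    obtain ⟨_, hmem'⟩ := insert_point_lemma hTH' hTne' hl0'
    -- T = T'
    have hTT : T = T' := by
      ext x
      constructor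
      · intro hx
        refine hmem' x ?_ (mem_HA.1 (hTH hx))
        rw [← h]
        exact subset_affineSpan ℝ _ (Set.mem_insert_of_mem _ hx)
      · intro hx
        refine hmem x ?_ (mem_HA.1 (hTH' hx))
        rw [h]
        exact subset_affineSpan ℝ _ (Set.mem_insert_of_mem _ hx)
    -- l = l'
    have hll : l = l' := by
      by_contra hne
      have hlΓ : l ∈ affineSpan ℝ (insert l (T : Set (Fin d → ℝ))) :=
        subset_affineSpan ℝ _ (Set.mem_insert _ _)
      have hlΓ' : l' ∈ affineSpan ℝ (insert l (T : Set (Fin d → ℝ))) := by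
        rw [h]; exact subset_affineSpan ℝ _ (Set.mem_insert _ _)
      have h0 : (0 : Fin d → ℝ) ∈ affineSpan ℝ (insert l (T : Set (Fin d → ℝ))) :=
        zero_mem_of_two hlΓ hlΓ' (L_mem_axis hL hl) (L_mem_axis hL hl') hne
      have h0T : (0 : Fin d → ℝ) ∈ T := hmem _ h0 rfl
      exact hO T ⟨k - 1, by omega, hTd, hTs⟩ h0T
    simp [hTT, hll]
  calc nFlats ℝ ((S : Set (Fin d → ℝ))) (k - 1) * L.card
      = Nat.card ({T : AffineSubspace ℝ (Fin d → ℝ) //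
          Spans (S : Set (Fin d → ℝ)) (k-1) T} × {l : Fin d → ℝ // l ∈ L}) := by
        rw [Nat.card_prod, nFlats]
        congr 1
        rw [Nat.card_eq_fintype_card, Fintype.card_coe]
    _ ≤ _ := Nat.card_le_card_of_injective φ hinj


lemma adim_span_singleton (l : Fin d → ℝ) :
    adim (affineSpan ℝ ({l} : Set (Fin d → ℝ))) = 0 := by
  have hnb : affineSpan ℝ ({l} : Set (Fin d → ℝ)) ≠ ⊥ := by
    rw [← AffineSubspace.nonempty_iff_ne_bot]
    exact ⟨l, subset_affineSpan ℝ _ rfl⟩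
  rw [adim, if_neg hnb, direction_affineSpan, vectorSpan_singleton]
  simp

include hS in
lemma span_inter_le_HA {A : Set (Fin d → ℝ)} :
    affineSpan ℝ ((S : Set (Fin d → ℝ)) ∩ A) ≤ HA (d := d) :=
  affineSpan_le.2 fun x hx => mem_HA.2 (hS x hx.1)

lemma spans_case0 {Γ : AffineSubspace ℝ (Fin d → ℝ)}
    (hΓ : Spans ((S : Set (Fin d → ℝ)) ∪ (L : Set (Fin d → ℝ))) (k+1) Γ)
    (h : ∀ l ∈ L, l ∉ Γ) : Spans ((S : Set (Fin d → ℝ))) (k+1) Γ := by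
  refine ⟨hΓ.1, ?_⟩
  have he : ((S : Set (Fin d → ℝ)) ∪ (L : Set (Fin d → ℝ))) ∩ ↑Γ
      = (S : Set (Fin d → ℝ)) ∩ ↑Γ := by
    ext x
    constructor
    · rintro ⟨hx | hx, hxΓ⟩
      · exact ⟨hx, hxΓ⟩
      · exact absurd hxΓ (h x (by exact_mod_cast hx))
    · rintro ⟨hx, hxΓ⟩
      exact ⟨Or.inl hx, hxΓ⟩
  rw [← he, hΓ.2]

include hS hL hL0 in
lemma spans_case1 (hk : 0 < k) {Γ : AffineSubspace ℝ (Fin d → ℝ)}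
    (hΓ : Spans ((S : Set (Fin d → ℝ)) ∪ (L : Set (Fin d → ℝ))) (k+1) Γ)
    {l : Fin d → ℝ} (hlL : l ∈ L) (hlΓ : l ∈ Γ)
    (huniq : ∀ l' ∈ L, l' ∈ Γ → l' = l) :
    Spans ((S : Set (Fin d → ℝ))) k (affineSpan ℝ ((S : Set (Fin d → ℝ)) ∩ ↑Γ)) ∧
      Γ = affineSpan ℝ
        (insert l ((affineSpan ℝ ((S : Set (Fin d → ℝ)) ∩ ↑Γ)) : Set (Fin d → ℝ))) := by
  set T := affineSpan ℝ ((S : Set (Fin d → ℝ)) ∩ ↑Γ) with hT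
  have hTΓ : T ≤ Γ := affineSpan_le.2 fun x hx => hx.2
  have hunion : ((S : Set (Fin d → ℝ)) ∪ (L : Set (Fin d → ℝ))) ∩ ↑Γ
      = insert l ((S : Set (Fin d → ℝ)) ∩ ↑Γ) := by
    ext x
    constructor
    · rintro ⟨hx | hx, hxΓ⟩
      · exact Set.mem_insert_of_mem _ ⟨hx, hxΓ⟩
      · exact Or.inl (huniq x (by exact_mod_cast hx) hxΓ)
    · rintro (rfl | ⟨hx, hxΓ⟩)
      · exact ⟨Or.inr (by exact_mod_cast hlL), hlΓ⟩
      · exact ⟨Or.inl hx, hxΓ⟩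
  have hΓeq : Γ = affineSpan ℝ (insert l (T : Set (Fin d → ℝ))) := by
    conv_lhs => rw [← hΓ.2]
    rw [hunion, hT, affineSpan_insert_affineSpan]
  have hTne : T ≠ ⊥ := by
    intro hb
    have hΓl : Γ = affineSpan ℝ ({l} : Set (Fin d → ℝ)) := by
      rw [hΓeq, hb]
      congr 1
      simp
    have h0 : adim Γ = 0 := by rw [hΓl, adim_span_singleton]
    have := hΓ.1
    omega
  have hTH : T ≤ HA (d := d) := span_inter_le_HA hS
  have had := (insert_point_lemma hTH hTne (L_x0 hL hL0 hlL)).1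
  have hadT : adim T = k := by
    have h1 := hΓ.1
    rw [hΓeq] at h1
    omega
  exact ⟨⟨hadT, spans_of_inter T rfl hTΓ⟩, hΓeq⟩

include hS hO hL hL0 in
lemma spans_case2 (hk : 0 < k) {Γ : AffineSubspace ℝ (Fin d → ℝ)}
    (hΓ : Spans ((S : Set (Fin d → ℝ)) ∪ (L : Set (Fin d → ℝ))) (k+1) Γ)
    {l l' : Fin d → ℝ} (hlL : l ∈ L) (hlΓ : l ∈ Γ) (hl'L : l' ∈ L) (hl'Γ : l' ∈ Γ)
    (hne : l ≠ l') :
    Spans ((S : Set (Fin d → ℝ))) (k-1) (affineSpan ℝ ((S : Set (Fin d → ℝ)) ∩ ↑Γ)) ∧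
      Γ = affineSpan ℝ ((S : Set (Fin d → ℝ)) ∩ ↑Γ) ⊔ axisA (d := d) := by
  set T := affineSpan ℝ ((S : Set (Fin d → ℝ)) ∩ ↑Γ) with hT
  have h0 : (0 : Fin d → ℝ) ∈ Γ :=
    zero_mem_of_two hlΓ hl'Γ (L_mem_axis hL hlL) (L_mem_axis hL hl'L) hne
  have haxis : axisA (d := d) ≤ Γ :=
    axis_le_of_mem h0 hlΓ (L_mem_axis hL hlL) (L_x0 hL hL0 hlL)
  have hTΓ : T ≤ Γ := affineSpan_le.2 fun x hx => hx.2
  have hΓeq : Γ = T ⊔ axisA (d := d) := by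
    apply le_antisymm
    · conv_lhs => rw [← hΓ.2]
      apply affineSpan_le.2
      rintro x ⟨hx | hx, hxΓ⟩
      · exact (le_sup_left : T ≤ T ⊔ axisA (d := d)) (subset_affineSpan ℝ _ ⟨hx, hxΓ⟩)
      · exact (le_sup_right : axisA (d := d) ≤ T ⊔ axisA (d := d))
          (L_mem_axis hL (by exact_mod_cast hx))
    · exact sup_le hTΓ haxis
  have hTne : T ≠ ⊥ := by
    intro hb
    have hax : Γ = axisA (d := d) := by rw [hΓeq, hb, bot_sup_eq]
    have h1 := hΓ.1
    rw [hax, adim_axisA] at h1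
    omega
  have hTH : T ≤ HA (d := d) := span_inter_le_HA hS
  have hsp : affineSpan ℝ ((S : Set (Fin d → ℝ)) ∩ ↑T) = T := spans_of_inter T rfl hTΓ
  have h0T : (0 : Fin d → ℝ) ∉ T :=
    hO T ⟨adim T, adim_nonneg_of_ne_bot hTne, rfl, hsp⟩
  have had := sup_axis_adim hTH hTne h0T
  have hadT : adim T = k - 1 := by
    rw [← hΓeq] at had
    have := hΓ.1
    omega
  exact ⟨⟨hadT, hsp⟩, hΓeq⟩

include hS hO hL hL0 in
lemma fk1_upper (hk : 0 < k) :
    nFlats ℝ ((S : Set (Fin d → ℝ)) ∪ (L : Set (Fin d → ℝ))) (k+1) ≤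
      nFlats ℝ ((S : Set (Fin d → ℝ))) (k+1) +
        nFlats ℝ ((S : Set (Fin d → ℝ))) k * L.card +
        nFlats ℝ ((S : Set (Fin d → ℝ))) (k-1) := by
  classical
  have hfin1 : Finite {Γ : AffineSubspace ℝ (Fin d → ℝ) // Spans ((S : Set (Fin d → ℝ))) (k+1) Γ} :=
    spans_finite S.finite_toSet _
  have hfin2 : Finite {Γ : AffineSubspace ℝ (Fin d → ℝ) // Spans ((S : Set (Fin d → ℝ))) k Γ} :=
    spans_finite S.finite_toSet _
  have hfin3 : Finite {Γ : AffineSubspace ℝ (Fin d → ℝ) // Spans ((S : Set (Fin d → ℝ))) (k-1) Γ} :=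
    spans_finite S.finite_toSet _
  let ψ : {Γ : AffineSubspace ℝ (Fin d → ℝ) //
        Spans ((S : Set (Fin d → ℝ)) ∪ (L : Set (Fin d → ℝ))) (k+1) Γ} →
      {Γ : AffineSubspace ℝ (Fin d → ℝ) // Spans ((S : Set (Fin d → ℝ))) (k+1) Γ} ⊕
      ({Γ : AffineSubspace ℝ (Fin d → ℝ) // Spans ((S : Set (Fin d → ℝ))) k Γ} ×
        {l : Fin d → ℝ // l ∈ L}) ⊕
      {Γ : AffineSubspace ℝ (Fin d → ℝ) // Spans ((S : Set (Fin d → ℝ))) (k-1) Γ} :=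
    fun Γp =>
      if h1 : ∃ l, l ∈ L ∧ l ∈ Γp.1 then
        if h2 : ∃ l', l' ∈ L ∧ l' ∈ Γp.1 ∧ l' ≠ h1.choose then
          Sum.inr (Sum.inr ⟨_, (spans_case2 hS hO hL hL0 hk Γp.2
            h1.choose_spec.1 h1.choose_spec.2 h2.choose_spec.1 h2.choose_spec.2.1
            (Ne.symm h2.choose_spec.2.2)).1⟩)
        else
          Sum.inr (Sum.inl (⟨_, (spans_case1 hS hL hL0 hk Γp.2
            h1.choose_spec.1 h1.choose_spec.2
            (fun l' hl' hmem => by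
              by_contra hne
              exact h2 ⟨l', hl', hmem, hne⟩)).1⟩,
            ⟨h1.choose, h1.choose_spec.1⟩))
      else Sum.inl ⟨Γp.1, spans_case0 Γp.2 (fun l hl hmem => h1 ⟨l, hl, hmem⟩)⟩
  have hinj : Function.Injective ψ := by
    intro Γp Γq h
    by_cases hp1 : ∃ l, l ∈ L ∧ l ∈ Γp.1 <;>
      by_cases hq1 : ∃ l, l ∈ L ∧ l ∈ Γq.1
    · by_cases hp2 : ∃ l', l' ∈ L ∧ l' ∈ Γp.1 ∧ l' ≠ hp1.choose <;>
        by_cases hq2 : ∃ l', l' ∈ L ∧ l' ∈ Γq.1 ∧ l' ≠ hq1.choose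
      · -- case2/case2
        simp only [ψ, dif_pos hp1, dif_pos hq1, dif_pos hp2, dif_pos hq2] at h
        have hTeq : affineSpan ℝ ((S : Set (Fin d → ℝ)) ∩ ↑Γp.1)
            = affineSpan ℝ ((S : Set (Fin d → ℝ)) ∩ ↑Γq.1) := by
          have := Sum.inr_injective h
          have := Sum.inr_injective this
          exact congrArg Subtype.val this
        have e1 := (spans_case2 hS hO hL hL0 hk Γp.2 hp1.choose_spec.1 hp1.choose_spec.2
          hp2.choose_spec.1 hp2.choose_spec.2.1 (Ne.symm hp2.choose_spec.2.2)).2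
        have e2 := (spans_case2 hS hO hL hL0 hk Γq.2 hq1.choose_spec.1 hq1.choose_spec.2
          hq2.choose_spec.1 hq2.choose_spec.2.1 (Ne.symm hq2.choose_spec.2.2)).2
        ext1
        rw [e1, e2, hTeq]
      · simp only [ψ, dif_pos hp1, dif_pos hq1, dif_pos hp2, dif_neg hq2] at h
        simp at h
      · simp only [ψ, dif_pos hp1, dif_pos hq1, dif_neg hp2, dif_pos hq2] at h
        simp at h
      · -- case1/case1
        simp only [ψ, dif_pos hp1, dif_pos hq1, dif_neg hp2, dif_neg hq2] at h
        have h' := Sum.inr_injective h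
        have h'' := Sum.inl_injective h'
        have hTeq : affineSpan ℝ ((S : Set (Fin d → ℝ)) ∩ ↑Γp.1)
            = affineSpan ℝ ((S : Set (Fin d → ℝ)) ∩ ↑Γq.1) :=
          congrArg Subtype.val (congrArg Prod.fst h'')
        have hleq : hp1.choose = hq1.choose :=
          congrArg Subtype.val (congrArg Prod.snd h'')
        have e1 := (spans_case1 hS hL hL0 hk Γp.2 hp1.choose_spec.1 hp1.choose_spec.2
          (fun l' hl' hmem => by by_contra hne; exact hp2 ⟨l', hl', hmem, hne⟩)).2
        have e2 := (spans_case1 hS hL hL0 hk Γq.2 hq1.choose_spec.1 hq1.choose_spec.2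
          (fun l' hl' hmem => by by_contra hne; exact hq2 ⟨l', hl', hmem, hne⟩)).2
        ext1
        rw [e1, e2, hTeq, hleq]
    · by_cases hp2 : ∃ l', l' ∈ L ∧ l' ∈ Γp.1 ∧ l' ≠ hp1.choose
      · simp only [ψ, dif_pos hp1, dif_neg hq1, dif_pos hp2] at h
        simp at h
      · simp only [ψ, dif_pos hp1, dif_neg hq1, dif_neg hp2] at h
        simp at h
    · by_cases hq2 : ∃ l', l' ∈ L ∧ l' ∈ Γq.1 ∧ l' ≠ hq1.choose
      · simp only [ψ, dif_neg hp1, dif_pos hq1, dif_pos hq2] at h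
        simp at h
      · simp only [ψ, dif_neg hp1, dif_pos hq1, dif_neg hq2] at h
        simp at h
    · -- case0/case0
      simp only [ψ, dif_neg hp1, dif_neg hq1] at h
      have h' := Sum.inl_injective h
      rw [Subtype.mk.injEq] at h'
      exact Subtype.ext h'
  calc nFlats ℝ ((S : Set (Fin d → ℝ)) ∪ (L : Set (Fin d → ℝ))) (k+1)
      ≤ Nat.card ({Γ : AffineSubspace ℝ (Fin d → ℝ) // Spans ((S : Set (Fin d → ℝ))) (k+1) Γ} ⊕
        ({Γ : AffineSubspace ℝ (Fin d → ℝ) // Spans ((S : Set (Fin d → ℝ))) k Γ} ×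
          {l : Fin d → ℝ // l ∈ L}) ⊕
        {Γ : AffineSubspace ℝ (Fin d → ℝ) // Spans ((S : Set (Fin d → ℝ))) (k-1) Γ}) :=
        Nat.card_le_card_of_injective ψ hinj
    _ = _ := by
        rw [Nat.card_sum, Nat.card_sum, Nat.card_prod, add_assoc,
          Nat.card_eq_finsetCard]
        rfl


lemma gdim_zero_mem (P : Finset (Fin d → ℝ)) {t : ℤ} (ht : 0 ≤ t) :
    0 ∈ {c : ℕ | ∃ P' ⊆ P, EssDimLE ℝ (P' : Set (Fin d → ℝ)) t ∧ P'.card = c} := by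
  refine ⟨∅, Finset.empty_subset _, ⟨∅, ?_, ?_, ?_⟩, rfl⟩
  · intro Γ hΓ; exact absurd hΓ (Finset.notMem_empty _)
  · intro q hq; simp at hq
  · simpa using ht

lemma gdim_bdd (P : Finset (Fin d → ℝ)) (t : ℤ) :
    BddAbove {c : ℕ | ∃ P' ⊆ P, EssDimLE ℝ (P' : Set (Fin d → ℝ)) t ∧ P'.card = c} := by
  refine ⟨P.card, ?_⟩
  rintro c ⟨P', hsub, _, rfl⟩
  exact Finset.card_le_card hsub

lemma le_gdim {P P' : Finset (Fin d → ℝ)} {t : ℤ} (hsub : P' ⊆ P)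
    (hess : EssDimLE ℝ (P' : Set (Fin d → ℝ)) t) : P'.card ≤ gdim ℝ P t :=
  le_csSup (gdim_bdd P t) ⟨P', hsub, hess, rfl⟩

lemma gdim_le {P : Finset (Fin d → ℝ)} {t : ℤ} (ht : 0 ≤ t) {b : ℕ}
    (h : ∀ P' ⊆ P, EssDimLE ℝ (P' : Set (Fin d → ℝ)) t → P'.card ≤ b) :
    gdim ℝ P t ≤ b := by
  refine csSup_le ⟨0, gdim_zero_mem P ht⟩ ?_
  rintro c ⟨P', hsub, hess, rfl⟩
  exact h P' hsub hess

lemma gdim_attained (P : Finset (Fin d → ℝ)) {t : ℤ} (ht : 0 ≤ t) :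
    ∃ P' ⊆ P, EssDimLE ℝ (P' : Set (Fin d → ℝ)) t ∧ P'.card = gdim ℝ P t :=
  Nat.sSup_mem ⟨0, gdim_zero_mem P ht⟩ (gdim_bdd P t)

include hO in
lemma zero_not_mem_S : (0 : Fin d → ℝ) ∉ S := by
  intro h0
  refine hO (affineSpan ℝ ({(0 : Fin d → ℝ)} : Set (Fin d → ℝ)))
    ⟨0, le_refl _, adim_span_singleton _, ?_⟩ (subset_affineSpan ℝ _ rfl)
  apply le_antisymm
  · exact affineSpan_le.2 fun x hx => hx.2
  · apply affineSpan_le.2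
    intro x hx
    rcases hx with rfl
    exact subset_affineSpan ℝ _ ⟨by exact_mod_cast h0, subset_affineSpan ℝ _ rfl⟩

include hS hL hL0 in
lemma S_disj_L : Disjoint S L := by
  rw [Finset.disjoint_left]
  intro a haS haL
  exact L_x0 hL hL0 haL (hS a haS)

include hS hO in
/-- if a flat through two distinct axis points is in a covering family, the S-part can be
re-covered one dimension cheaper -/
lemma reduce_cover {PS : Finset (Fin d → ℝ)} (hPS : PS ⊆ S)
    {G : Finset (AffineSubspace ℝ (Fin d → ℝ))}
    (hG1 : ∀ Γ ∈ G, 1 ≤ adim Γ)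
    (hG2 : ∀ q ∈ PS, ∃ Γ ∈ G, q ∈ Γ)
    {t : ℤ} (hG3 : ∑ Γ ∈ G, adim Γ ≤ t)
    {Γ₀ : AffineSubspace ℝ (Fin d → ℝ)} (hΓ₀ : Γ₀ ∈ G)
    (h0 : (0 : Fin d → ℝ) ∈ Γ₀) (haxis : axisA (d := d) ≤ Γ₀) :
    EssDimLE ℝ (PS : Set (Fin d → ℝ)) (t - 1) := by
  classical
  set T₀ := Γ₀ ⊓ HA (d := d) with hT₀
  have h0T : (0 : Fin d → ℝ) ∈ T₀ := ⟨h0, mem_HA.2 rfl⟩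
  have hTne : T₀ ≠ ⊥ := by
    intro hb; rw [hb] at h0T; exact h0T
  have hΓne : Γ₀ ≠ ⊥ := by
    intro hb; rw [hb] at h0; exact h0
  have hdirlt : T₀.direction < Γ₀.direction := by
    rw [hT₀, direction_inf_of_mem h0 (mem_HA.2 rfl)]
    refine lt_of_le_of_ne inf_le_left ?_
    intro he
    have he₀Γ : e₀ (d := d) ∈ Γ₀.direction := by
      have := direction_le haxis
      apply this
      rw [axisA, Submodule.toAffineSubspace_direction]
      exact Submodule.mem_span_singleton_self _
    have : e₀ (d := d) ∈ Γ₀.direction ⊓ (HA (d := d)).direction := by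
      rw [he]; exact he₀Γ
    have h1 : e₀ (d := d) 0 = 0 := direction_HA_mem.1 this.2
    rw [e₀_zero] at h1
    exact one_ne_zero h1
  have hadim : adim T₀ ≤ adim Γ₀ - 1 := by
    rw [adim_eq_finrank hTne, adim_eq_finrank hΓne]
    have := Submodule.finrank_lt_finrank_of_lt hdirlt
    omega
  -- the S-points covered by Γ₀ lie in T₀; if adim T₀ = 0 then T₀ = {0} misses S
  by_cases hTdim : 1 ≤ adim T₀
  · refine ⟨insert T₀ (G.erase Γ₀), ?_, ?_, ?_⟩
    · intro Γ hΓ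
      rcases Finset.mem_insert.1 hΓ with rfl | hΓ
      · exact hTdim
      · exact hG1 Γ (Finset.mem_of_mem_erase hΓ)
    · intro q hq
      obtain ⟨Γ, hΓG, hqΓ⟩ := hG2 q (by exact_mod_cast hq)
      by_cases hqe : Γ = Γ₀
      · subst hqe
        refine ⟨T₀, Finset.mem_insert_self _ _, hqΓ, mem_HA.2 (hS q (hPS (by exact_mod_cast hq)))⟩
      · exact ⟨Γ, Finset.mem_insert_of_mem (Finset.mem_erase.2 ⟨hqe, hΓG⟩), hqΓ⟩
    · have herase : ∑ Γ ∈ G.erase Γ₀, adim Γ = (∑ Γ ∈ G, adim Γ) - adim Γ₀ := by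
        rw [← Finset.sum_erase_add G _ hΓ₀]; ring
      by_cases hmem : T₀ ∈ G.erase Γ₀
      · rw [Finset.insert_eq_self.2 hmem, herase]
        have := hG1 Γ₀ hΓ₀
        omega
      · rw [Finset.sum_insert hmem, herase]
        omega
  · -- T₀ = {0}: Γ₀ contains no point of PS
    have hTdim0 : adim T₀ = 0 := by
      have h0le : (0 : ℤ) ≤ adim T₀ := by
        rw [adim_eq_finrank hTne]; positivity
      omega
    have hdirbot : T₀.direction = ⊥ := by
      rw [adim_eq_finrank hTne] at hTdim0
      have : finrank ℝ T₀.direction = 0 := by exact_mod_cast hTdim0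
      exact Submodule.finrank_eq_zero.1 this
    have hsingle : ∀ x ∈ T₀, x = 0 := by
      intro x hx
      have := AffineSubspace.vsub_mem_direction hx h0T
      rw [hdirbot, Submodule.mem_bot, vsub_eq_sub, sub_zero] at this
      exact this
    refine ⟨G.erase Γ₀, fun Γ hΓ => hG1 Γ (Finset.mem_of_mem_erase hΓ), ?_, ?_⟩
    · intro q hq
      obtain ⟨Γ, hΓG, hqΓ⟩ := hG2 q (by exact_mod_cast hq)
      by_cases hqe : Γ = Γ₀
      · subst hqe
        exfalso
        have hq0 : q = 0 := hsingle q ⟨hqΓ, mem_HA.2 (hS q (hPS (by exact_mod_cast hq)))⟩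
        rw [hq0] at hq
        exact zero_not_mem_S hO (hPS (by exact_mod_cast hq))
      · exact ⟨Γ, Finset.mem_erase.2 ⟨hqe, hΓG⟩, hqΓ⟩
    · have herase : ∑ Γ ∈ G.erase Γ₀, adim Γ = (∑ Γ ∈ G, adim Γ) - adim Γ₀ := by
        rw [← Finset.sum_erase_add G _ hΓ₀]; ring
      rw [herase]
      have := hG1 Γ₀ hΓ₀
      omega

include hS hO hL hL0 in
lemma gdim_union (hk : 0 < k) (hm : S.card + k.toNat + 1 ≤ L.card) :
    gdim ℝ (S ∪ L) (k + 1) = gdim ℝ S k + L.card := by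
  classical
  apply le_antisymm
  · refine gdim_le (by omega) ?_
    intro P' hsub hess
    obtain ⟨G, hG1, hG2, hG3⟩ := hess
    set PS := P' ∩ S with hPS
    set PL := P' ∩ L with hPL
    have hsplit : P'.card ≤ PS.card + PL.card := by
      have h1 : P' ⊆ PS ∪ PL := by
        intro a ha
        rcases Finset.mem_union.1 (hsub ha) with h | h
        · exact Finset.mem_union_left _ (Finset.mem_inter.2 ⟨ha, h⟩)
        · exact Finset.mem_union_right _ (Finset.mem_inter.2 ⟨ha, h⟩)
      calc P'.card ≤ (PS ∪ PL).card := Finset.card_le_card h1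
        _ ≤ PS.card + PL.card := Finset.card_union_le _ _
    by_cases hcase : EssDimLE ℝ (PS : Set (Fin d → ℝ)) k
    · have h1 : PS.card ≤ gdim ℝ S k := le_gdim (Finset.inter_subset_right) hcase
      have h2 : PL.card ≤ L.card := Finset.card_le_card (Finset.inter_subset_right)
      omega
    · -- every flat in G contains at most one point of PL
      have huniq : ∀ Γ ∈ G, ∀ l ∈ PL, ∀ l' ∈ PL, l ∈ Γ → l' ∈ Γ → l = l' := by
        intro Γ hΓ l hl l' hl' hlΓ hl'Γ
        by_contra hne
        have hlL : l ∈ L := (Finset.mem_inter.1 hl).2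
        have hl'L : l' ∈ L := (Finset.mem_inter.1 hl').2
        have h0 : (0 : Fin d → ℝ) ∈ Γ :=
          zero_mem_of_two hlΓ hl'Γ (L_mem_axis hL hlL) (L_mem_axis hL hl'L) hne
        have haxis : axisA (d := d) ≤ Γ :=
          axis_le_of_mem h0 hlΓ (L_mem_axis hL hlL) (L_x0 hL hL0 hlL)
        have hred := reduce_cover hS hO
          (show PS ⊆ S from Finset.inter_subset_right) hG1
          (fun q hq => hG2 q (Finset.mem_coe.2
            ((Finset.inter_subset_left : P' ∩ S ⊆ P') (Finset.mem_coe.1 hq))))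
          hG3 hΓ h0 haxis
        have : EssDimLE ℝ (PS : Set (Fin d → ℝ)) k := by
          obtain ⟨G', a, b, c⟩ := hred
          exact ⟨G', a, b, by omega⟩
        exact hcase this
      -- PL.card ≤ G.card
      have hPLcard : PL.card ≤ G.card := by
        have hf : ∀ l ∈ PL, ∃ Γ ∈ G, l ∈ Γ := by
          intro l hl
          exact hG2 l (Finset.mem_coe.2
            ((Finset.inter_subset_left : P' ∩ L ⊆ P') hl))
        choose f hfG hfmem using hf
        refine Finset.card_le_card_of_injOn
          (fun l => if h : l ∈ PL then f l h else ⊥) ?_ ?_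
        · intro l hl
          show (if h : l ∈ PL then f l h else ⊥) ∈ G
          rw [dif_pos (Finset.mem_coe.1 hl)]
          exact hfG l (Finset.mem_coe.1 hl)
        · intro l hl l' hl' he
          have hl1 : l ∈ PL := Finset.mem_coe.1 hl
          have hl2 : l' ∈ PL := Finset.mem_coe.1 hl'
          have he2 : (if h : l ∈ PL then f l h else ⊥) = (if h : l' ∈ PL then f l' h else ⊥) := he
          rw [dif_pos hl1, dif_pos hl2] at he2
          refine huniq _ (hfG l' hl2) _ hl1 _ hl2 ?_ (hfmem l' hl2)
          rw [← he2]
          exact hfmem l hl1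
      have hGcard : (G.card : ℤ) ≤ k + 1 := by
        have h1 : (G.card : ℤ) ≤ ∑ Γ ∈ G, adim Γ := by
          calc (G.card : ℤ) = ∑ _Γ ∈ G, (1 : ℤ) := by
                rw [Finset.sum_const, nsmul_eq_mul, mul_one]
            _ ≤ _ := Finset.sum_le_sum hG1
        omega
      have hPScard : PS.card ≤ S.card := Finset.card_le_card Finset.inter_subset_right
      have hG : G.card ≤ k.toNat + 1 := by omega
      have : P'.card ≤ S.card + k.toNat + 1 := by omega
      have hLge : S.card + k.toNat + 1 ≤ L.card := hm
      omega
  · obtain ⟨A, hAsub, ⟨G, hG1, hG2, hG3⟩, hAcard⟩ := gdim_attained S (le_of_lt hk)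
    have hdisj : Disjoint A L :=
      Finset.disjoint_of_subset_left hAsub (S_disj_L hS hL hL0)
    have hcard : (A ∪ L).card = gdim ℝ S k + L.card := by
      rw [Finset.card_union_of_disjoint hdisj, hAcard]
    rw [← hcard]
    refine le_gdim (Finset.union_subset_union hAsub (le_refl L)) ?_
    refine ⟨insert (axisA (d := d)) G, ?_, ?_, ?_⟩
    · intro Γ hΓ
      rcases Finset.mem_insert.1 hΓ with rfl | hΓ
      · rw [adim_axisA]
      · exact hG1 Γ hΓ
    · intro q hq
      rcases Finset.mem_union.1 (by exact_mod_cast hq) with h | h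
      · obtain ⟨Γ, hΓG, hqΓ⟩ := hG2 q (by exact_mod_cast h)
        exact ⟨Γ, Finset.mem_insert_of_mem hΓG, hqΓ⟩
      · exact ⟨axisA (d := d), Finset.mem_insert_self _ _, L_mem_axis hL h⟩
    · by_cases hmem : axisA (d := d) ∈ G
      · rw [Finset.insert_eq_self.2 hmem]
        omega
      · rw [Finset.sum_insert hmem, adim_axisA]
        omega

end Main
end Stmt17

/-- Monotonicity construction: if `S` lies in the hyperplane `x_0 = 0` of `ℝ^d` with
`f_k(S) < f_{k-1}(S)`, no flat spanned by `S` passes through the origin, every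
`(k+1)`-flat through the origin contains no more points of `S` than some `k`-flat does, and
`|S| - g_k(S) = c`, then for all sufficiently large `m`, adding a set `L` of `m` collinear
points on the axis through the origin perpendicular to the hyperplane (avoiding the origin)
yields `P = S ∪ L` with `f_{k+1}(P) < f_k(P)` and `|P| - g_{k+1}(P) = c`. -/
theorem stmt_17 {d : ℕ} [NeZero d] (k : ℤ) (hk : 0 < k) (c : ℤ)
    (S : Finset (Fin d → ℝ))
    (hS : ∀ p ∈ S, p 0 = 0)
    (hf : nFlats ℝ (S : Set (Fin d → ℝ)) k < nFlats ℝ (S : Set (Fin d → ℝ)) (k - 1))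
    (hO : ∀ Γ : AffineSubspace ℝ (Fin d → ℝ),
      (∃ j : ℤ, 0 ≤ j ∧ Spans (S : Set (Fin d → ℝ)) j Γ) → (0 : Fin d → ℝ) ∉ Γ)
    (hgen : ∀ Γ : AffineSubspace ℝ (Fin d → ℝ), adim Γ = k + 1 → (0 : Fin d → ℝ) ∈ Γ →
      ∃ Γ' : AffineSubspace ℝ (Fin d → ℝ), adim Γ' = k ∧
        (S.filter (fun p => p ∈ Γ)).card ≤ (S.filter (fun p => p ∈ Γ')).card)
    (hg : (S.card : ℤ) - gdim ℝ S k = c) :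
    ∃ m0 : ℕ, ∀ m : ℕ, m0 ≤ m → ∀ L : Finset (Fin d → ℝ),
      L.card = m → (∀ p ∈ L, ∀ i, i ≠ 0 → p i = 0) → (0 : Fin d → ℝ) ∉ L →
      nFlats ℝ ((S : Set (Fin d → ℝ)) ∪ (L : Set (Fin d → ℝ))) (k + 1) <
          nFlats ℝ ((S : Set (Fin d → ℝ)) ∪ (L : Set (Fin d → ℝ))) k ∧
        ((S ∪ L).card : ℤ) - gdim ℝ (S ∪ L) (k + 1) = c := by
  classical
  refine ⟨S.card + k.toNat + nFlats ℝ (S : Set (Fin d → ℝ)) (k+1) +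
    nFlats ℝ (S : Set (Fin d → ℝ)) (k-1) + 2, ?_⟩
  intro m hm L hLcard hL hL0
  constructor
  · -- flat counting
    have h1 := Stmt17.fk_lower hS hO hL hL0 hk
    have h2 := Stmt17.fk1_upper hS hO hL hL0 hk
    set a := nFlats ℝ (S : Set (Fin d → ℝ)) (k+1) with ha
    set b := nFlats ℝ (S : Set (Fin d → ℝ)) k with hb
    set cn := nFlats ℝ (S : Set (Fin d → ℝ)) (k-1) with hc
    have hf' : b < cn := hf
    have h3 : a + cn + 1 ≤ L.card := by omega
    calc nFlats ℝ ((S : Set (Fin d → ℝ)) ∪ (L : Set (Fin d → ℝ))) (k + 1)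
        ≤ a + b * L.card + cn := h2
      _ = b * L.card + (a + cn) := by ring
      _ < b * L.card + L.card := Nat.add_lt_add_left (by omega) _
      _ = (b + 1) * L.card := by ring
      _ ≤ cn * L.card := Nat.mul_le_mul_right _ (by omega)
      _ ≤ nFlats ℝ ((S : Set (Fin d → ℝ)) ∪ (L : Set (Fin d → ℝ))) k := h1
  · -- cardinality identity
    have hgu := Stmt17.gdim_union hS hO hL hL0 hk (by omega)
    have hcardU : (S ∪ L).card = S.card + L.card :=
      Finset.card_union_of_disjoint (Stmt17.S_disj_L hS hL hL0)
    rw [hgu, hcardU]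
    push_cast
    omega
end
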